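/- The normalizer of the subgroup R_D × {0} in the group G = (SL(2,ℂ) × SL(2,ℂ)) ⋊ ℤ/2ℤ equals the subgroup {(h, ε) ∈ G : h ∈ S, ε ∈ ℤ/2ℤ} (i.e. N_G(R_D) = S ⋊ ℤ/2ℤ). -/

import Mathlib

open Matrix

abbrev SL2 := Matrix.SpecialLinearGroup (Fin 2) ℂ

/-- The diagonal matrix `diag(t, t⁻¹)` as an element of `SL(2,ℂ)`. -/
def dmat (t : ℂˣ) : SL2 :=
  ⟨!![(t : ℂ), 0; 0, ((t⁻¹ : ℂˣ) : ℂ)], by simp [Matrix.det_fin_two_of]⟩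

lemma dmat_one : dmat 1 = 1 := by
  apply Subtype.ext
  simp only [dmat, Matrix.SpecialLinearGroup.coe_one, Matrix.one_fin_two]
  norm_num

lemma dmat_mul (s t : ℂˣ) : dmat (s * t) = dmat s * dmat t := by
  apply Subtype.ext
  rw [Matrix.SpecialLinearGroup.coe_mul]
  simp only [dmat, Matrix.mul_fin_two]
  rw [mul_inv]
  push_cast
  norm_num

lemma dmat_inv (t : ℂˣ) : (dmat t)⁻¹ = dmat t⁻¹ := by
  apply Subtype.ext
  rw [Matrix.SpecialLinearGroup.coe_inv]
  simp only [dmat, Matrix.adjugate_fin_two_of]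
  norm_num

/-- The torus `R_D = {(diag(t,t⁻¹), diag(t,t⁻¹)) : t ∈ ℂˣ}`. -/
def RD : Subgroup (SL2 × SL2) where
  carrier := {p | ∃ t : ℂˣ, p = (dmat t, dmat t)}
  one_mem' := ⟨1, by rw [dmat_one]; rfl⟩
  mul_mem' := by
    rintro a b ⟨s, rfl⟩ ⟨t, rfl⟩
    exact ⟨s * t, by rw [dmat_mul]; rfl⟩
  inv_mem' := by
    rintro a ⟨t, rfl⟩
    exact ⟨t⁻¹, by rw [← dmat_inv]; rfl⟩

/-- The subgroup `S` of `SL(2,ℂ) × SL(2,ℂ)` consisting of the pairs `(A,B)` with `A`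
and `B` both diagonal or both antidiagonal. -/
def Ssub : Subgroup (SL2 × SL2) where
  carrier := {p |
    ((p.1 : Matrix (Fin 2) (Fin 2) ℂ) 0 1 = 0 ∧ (p.1 : Matrix (Fin 2) (Fin 2) ℂ) 1 0 = 0 ∧
     (p.2 : Matrix (Fin 2) (Fin 2) ℂ) 0 1 = 0 ∧ (p.2 : Matrix (Fin 2) (Fin 2) ℂ) 1 0 = 0) ∨
    ((p.1 : Matrix (Fin 2) (Fin 2) ℂ) 0 0 = 0 ∧ (p.1 : Matrix (Fin 2) (Fin 2) ℂ) 1 1 = 0 ∧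
     (p.2 : Matrix (Fin 2) (Fin 2) ℂ) 0 0 = 0 ∧ (p.2 : Matrix (Fin 2) (Fin 2) ℂ) 1 1 = 0)}
  one_mem' := by
    left
    simp [Matrix.SpecialLinearGroup.coe_one, Matrix.one_apply]
  mul_mem' := by
    intro a b ha hb
    rcases ha with ⟨h1, h2, h3, h4⟩ | ⟨h1, h2, h3, h4⟩ <;>
      rcases hb with ⟨g1, g2, g3, g4⟩ | ⟨g1, g2, g3, g4⟩
    · left
      refine ⟨?_, ?_, ?_, ?_⟩ <;>
        simp [Prod.fst_mul, Prod.snd_mul, Matrix.mul_apply, Fin.sum_univ_two,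
          h1, h2, h3, h4, g1, g2, g3, g4]
    · right
      refine ⟨?_, ?_, ?_, ?_⟩ <;>
        simp [Prod.fst_mul, Prod.snd_mul, Matrix.mul_apply, Fin.sum_univ_two,
          h1, h2, h3, h4, g1, g2, g3, g4]
    · right
      refine ⟨?_, ?_, ?_, ?_⟩ <;>
        simp [Prod.fst_mul, Prod.snd_mul, Matrix.mul_apply, Fin.sum_univ_two,
          h1, h2, h3, h4, g1, g2, g3, g4]
    · left
      refine ⟨?_, ?_, ?_, ?_⟩ <;>
        simp [Prod.fst_mul, Prod.snd_mul, Matrix.mul_apply, Fin.sum_univ_two,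
          h1, h2, h3, h4, g1, g2, g3, g4]
  inv_mem' := by
    intro a ha
    rcases ha with ⟨h1, h2, h3, h4⟩ | ⟨h1, h2, h3, h4⟩
    · left
      refine ⟨?_, ?_, ?_, ?_⟩ <;>
        simp [Prod.fst_inv, Prod.snd_inv, Matrix.SpecialLinearGroup.coe_inv,
          Matrix.adjugate_fin_two, h1, h2, h3, h4]
    · right
      refine ⟨?_, ?_, ?_, ?_⟩ <;>
        simp [Prod.fst_inv, Prod.snd_inv, Matrix.SpecialLinearGroup.coe_inv,
          Matrix.adjugate_fin_two, h1, h2, h3, h4]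

/-- The swap automorphism of `SL(2,ℂ) × SL(2,ℂ)`. -/
def swapAut : MulAut (SL2 × SL2) := (MulEquiv.prodComm : (SL2 × SL2) ≃* (SL2 × SL2))

lemma swapAut_apply (p : SL2 × SL2) : swapAut p = p.swap := rfl

lemma swapAut_sq : swapAut * swapAut = 1 := by
  apply MulEquiv.ext
  intro x
  rw [MulAut.mul_apply, swapAut_apply, swapAut_apply, Prod.swap_swap]
  rfl

/-- The homomorphism `ℤ/2ℤ →* MulAut N` determined by an automorphism of order
dividing 2, sending the nontrivial element to that automorphism. -/
def hom2 {N : Type*} [Group N] (σ : MulAut N) (h : σ * σ = 1) :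
    Multiplicative (ZMod 2) →* MulAut N where
  toFun e := σ ^ (Multiplicative.toAdd e).val
  map_one' := by simp
  map_mul' a b := by
    have h2 : σ ^ 2 = 1 := by rw [pow_two]; exact h
    show σ ^ (Multiplicative.toAdd (a * b)).val = _
    rw [toAdd_mul, ZMod.val_add, ← pow_eq_pow_mod _ h2, pow_add]

/-- The group `G = (SL(2,ℂ) × SL(2,ℂ)) ⋊ ℤ/2ℤ`, the nontrivial element of `ℤ/2ℤ`
acting by swapping the two factors. -/
abbrev Ggrp := (SL2 × SL2) ⋊[hom2 swapAut swapAut_sq] Multiplicative (ZMod 2)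

lemma pow_swapAut_mem (K : Subgroup (SL2 × SL2)) (hswap : ∀ p ∈ K, Prod.swap p ∈ K) :
    ∀ (n : ℕ) (p : SL2 × SL2), p ∈ K → (swapAut ^ n) p ∈ K := by
  intro n
  induction n with
  | zero => intro p hp; simpa using hp
  | succ m ih =>
    intro p hp
    rw [pow_succ, MulAut.mul_apply]
    exact ih _ (by rw [swapAut_apply]; exact hswap p hp)

/-- For a swap-invariant subgroup `K` of `SL(2,ℂ) × SL(2,ℂ)`, the subgroup
`{(h, ε) ∈ G : h ∈ K, ε ∈ ℤ/2ℤ} = K ⋊ ℤ/2ℤ` of `G`. -/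
def liftSub (K : Subgroup (SL2 × SL2)) (hswap : ∀ p ∈ K, Prod.swap p ∈ K) :
    Subgroup Ggrp where
  carrier := {x | x.left ∈ K}
  one_mem' := by
    show (1 : Ggrp).left ∈ K
    rw [SemidirectProduct.one_left]
    exact K.one_mem
  mul_mem' := by
    intro a b ha hb
    show (a * b).left ∈ K
    rw [SemidirectProduct.mul_left]
    exact K.mul_mem ha (pow_swapAut_mem K hswap _ _ hb)
  inv_mem' := by
    intro a ha
    show a⁻¹.left ∈ K
    rw [SemidirectProduct.inv_left]
    exact pow_swapAut_mem K hswap _ _ (K.inv_mem ha)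

lemma Ssub_swap_invariant : ∀ p ∈ Ssub, Prod.swap p ∈ Ssub := by
  intro p hp
  rcases hp with ⟨h1, h2, h3, h4⟩ | ⟨h1, h2, h3, h4⟩
  · exact Or.inl ⟨h3, h4, h1, h2⟩
  · exact Or.inr ⟨h3, h4, h1, h2⟩

section Helpers

noncomputable def u2 : ℂˣ := Units.mk0 2 two_ne_zero

lemma diag_or_anti (A : SL2) (s : ℂˣ) (h : A * dmat u2 = dmat s * A) :
    ((A : Matrix (Fin 2) (Fin 2) ℂ) 0 1 = 0 ∧ (A : Matrix (Fin 2) (Fin 2) ℂ) 1 0 = 0 ∧ (s:ℂ) = 2) ∨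
    ((A : Matrix (Fin 2) (Fin 2) ℂ) 0 0 = 0 ∧ (A : Matrix (Fin 2) (Fin 2) ℂ) 1 1 = 0 ∧ (s:ℂ) = 2⁻¹) := by
  have hm : (A : Matrix (Fin 2) (Fin 2) ℂ) * (dmat u2 : Matrix (Fin 2) (Fin 2) ℂ)
      = (dmat s : Matrix (Fin 2) (Fin 2) ℂ) * A := by
    exact_mod_cast congrArg Subtype.val h
  have h00 := congrFun (congrFun hm 0) 0
  have h01 := congrFun (congrFun hm 0) 1
  have h10 := congrFun (congrFun hm 1) 0
  have h11 := congrFun (congrFun hm 1) 1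
  simp [dmat, u2, Matrix.mul_apply, Fin.sum_univ_two] at h00 h01 h10 h11
  have hdet := A.2
  rw [Matrix.det_fin_two] at hdet
  by_cases ha : (A : Matrix (Fin 2) (Fin 2) ℂ) 0 0 = 0
  · right
    have hb : (A : Matrix (Fin 2) (Fin 2) ℂ) 0 1 ≠ 0 := by
      intro hb; rw [ha, hb] at hdet; simp at hdet
    have hs : (s : ℂ) = 2⁻¹ := by
      have h2 : ((2:ℂ)⁻¹ - s) * (A : Matrix (Fin 2) (Fin 2) ℂ) 0 1 = 0 := by
        linear_combination h01
      rcases mul_eq_zero.mp h2 with h' | h'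
      · exact (sub_eq_zero.mp h').symm
      · exact absurd h' hb
    have hsinv : ((s:ℂ))⁻¹ = 2 := by rw [hs, inv_inv]
    have hd : (A : Matrix (Fin 2) (Fin 2) ℂ) 1 1 = 0 := by
      rw [hsinv] at h11
      have h2 : ((2:ℂ)⁻¹ - 2) * (A : Matrix (Fin 2) (Fin 2) ℂ) 1 1 = 0 := by
        linear_combination h11
      rcases mul_eq_zero.mp h2 with h' | h'
      · norm_num at h'
      · exact h'
    exact ⟨ha, hd, hs⟩
  · left
    have hs : (s : ℂ) = 2 := by
      have h2 : ((2:ℂ) - s) * (A : Matrix (Fin 2) (Fin 2) ℂ) 0 0 = 0 := by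
        linear_combination h00
      rcases mul_eq_zero.mp h2 with h' | h'
      · exact (sub_eq_zero.mp h').symm
      · exact absurd h' ha
    have hsinv : ((s:ℂ))⁻¹ = 2⁻¹ := by rw [hs]
    have hbz : (A : Matrix (Fin 2) (Fin 2) ℂ) 0 1 = 0 := by
      rw [hs] at h01
      have h2 : ((2:ℂ)⁻¹ - 2) * (A : Matrix (Fin 2) (Fin 2) ℂ) 0 1 = 0 := by
        linear_combination h01
      rcases mul_eq_zero.mp h2 with h' | h'
      · norm_num at h'
      · exact h'
    have hcz : (A : Matrix (Fin 2) (Fin 2) ℂ) 1 0 = 0 := by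
      rw [hsinv] at h10
      have h2 : ((2:ℂ) - 2⁻¹) * (A : Matrix (Fin 2) (Fin 2) ℂ) 1 0 = 0 := by
        linear_combination h10
      rcases mul_eq_zero.mp h2 with h' | h'
      · norm_num at h'
      · exact h'
    exact ⟨hbz, hcz, hs⟩

lemma diag_comm (A : SL2) (hb : (A : Matrix (Fin 2) (Fin 2) ℂ) 0 1 = 0)
    (hc : (A : Matrix (Fin 2) (Fin 2) ℂ) 1 0 = 0) (t : ℂˣ) :
    A * dmat t = dmat t * A := by
  apply Subtype.ext
  show (A : Matrix (Fin 2) (Fin 2) ℂ) * _ = _ * (A : Matrix (Fin 2) (Fin 2) ℂ)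
  ext i j
  fin_cases i <;> fin_cases j <;>
    simp [dmat, Matrix.mul_apply, Fin.sum_univ_two, hb, hc, mul_comm]

lemma anti_comm (A : SL2) (ha : (A : Matrix (Fin 2) (Fin 2) ℂ) 0 0 = 0)
    (hd : (A : Matrix (Fin 2) (Fin 2) ℂ) 1 1 = 0) (t : ℂˣ) :
    A * dmat t = dmat t⁻¹ * A := by
  apply Subtype.ext
  show (A : Matrix (Fin 2) (Fin 2) ℂ) * _ = _ * (A : Matrix (Fin 2) (Fin 2) ℂ)
  ext i j
  fin_cases i <;> fin_cases j <;>
    simp [dmat, Matrix.mul_apply, Fin.sum_univ_two, ha, hd, mul_comm]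

end Helpers

lemma swap_pow_fix (n : ℕ) (t : ℂˣ) :
    (swapAut ^ n) (dmat t, dmat t) = (dmat t, dmat t) := by
  induction n with
  | zero => rfl
  | succ m ih =>
    rw [pow_succ, MulAut.mul_apply, swapAut_apply]
    exact ih

lemma phi_fix (e : Multiplicative (ZMod 2)) (t : ℂˣ) :
    (hom2 swapAut swapAut_sq e) (dmat t, dmat t) = (dmat t, dmat t) :=
  swap_pow_fix _ t

lemma phi_comp (e : Multiplicative (ZMod 2)) (y : SL2 × SL2) :
    (hom2 swapAut swapAut_sq e) ((hom2 swapAut swapAut_sq e⁻¹) y) = y := by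
  rw [← MulAut.mul_apply, ← _root_.map_mul, mul_inv_cancel, _root_.map_one, MulAut.one_apply]

lemma conj_inl (x : Ggrp) (t : ℂˣ) :
    x * SemidirectProduct.inl (dmat t, dmat t) * x⁻¹
      = SemidirectProduct.inl (x.left * (dmat t, dmat t) * x.left⁻¹) := by
  have hl : (x * SemidirectProduct.inl (dmat t, dmat t) * x⁻¹).left
      = x.left * (dmat t, dmat t) * x.left⁻¹ := by
    rw [SemidirectProduct.mul_left, SemidirectProduct.mul_left,
      SemidirectProduct.left_inl, SemidirectProduct.mul_right,
      SemidirectProduct.right_inl, mul_one, SemidirectProduct.inv_left,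
      phi_fix, phi_comp]
  have hr : (x * SemidirectProduct.inl (dmat t, dmat t) * x⁻¹).right = 1 := by
    rw [SemidirectProduct.mul_right, SemidirectProduct.mul_right,
      SemidirectProduct.right_inl, SemidirectProduct.inv_right, mul_one,
      mul_inv_cancel]
  have : x * SemidirectProduct.inl (dmat t, dmat t) * x⁻¹
      = ⟨(x * SemidirectProduct.inl (dmat t, dmat t) * x⁻¹).left,
         (x * SemidirectProduct.inl (dmat t, dmat t) * x⁻¹).right⟩ := rfl
  rw [this, hl, hr]
  rfl

lemma mem_RD_map (y : Ggrp) :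
    y ∈ RD.map (SemidirectProduct.inl : (SL2 × SL2) →* Ggrp)
      ↔ y.left ∈ RD ∧ y.right = 1 := by
  constructor
  · rintro ⟨p, hp, rfl⟩; exact ⟨hp, rfl⟩
  · rintro ⟨hl, hr⟩
    refine ⟨y.left, hl, ?_⟩
    have : y = ⟨y.left, y.right⟩ := rfl
    rw [this, hr]
    rfl

lemma conj_mem (x : Ggrp) (hx : x.left ∈ Ssub) {h : Ggrp}
    (hh : h ∈ RD.map (SemidirectProduct.inl : (SL2 × SL2) →* Ggrp)) :
    x * h * x⁻¹ ∈ RD.map (SemidirectProduct.inl : (SL2 × SL2) →* Ggrp) := by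
  obtain ⟨p, ⟨t, rfl⟩, rfl⟩ := hh
  rw [conj_inl]
  refine ⟨x.left * (dmat t, dmat t) * x.left⁻¹, ?_, rfl⟩
  rcases hx with ⟨h1, h2, h3, h4⟩ | ⟨h1, h2, h3, h4⟩
  · refine ⟨t, Prod.ext ?_ ?_⟩ <;>
      simp only [Prod.fst_mul, Prod.snd_mul, Prod.fst_inv, Prod.snd_inv]
    · rw [diag_comm x.left.1 h1 h2 t, mul_inv_cancel_right]
    · rw [diag_comm x.left.2 h3 h4 t, mul_inv_cancel_right]
  · refine ⟨t⁻¹, Prod.ext ?_ ?_⟩ <;>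
      simp only [Prod.fst_mul, Prod.snd_mul, Prod.fst_inv, Prod.snd_inv]
    · rw [anti_comm x.left.1 h1 h2 t, mul_inv_cancel_right]
    · rw [anti_comm x.left.2 h3 h4 t, mul_inv_cancel_right]

theorem normalizer_RD_eq_S_semidirect' :
    Subgroup.normalizer ((RD.map (SemidirectProduct.inl : (SL2 × SL2) →* Ggrp)) : Set Ggrp)
      = liftSub Ssub Ssub_swap_invariant := by
  ext x
  rw [Subgroup.mem_normalizer_iff]
  constructor
  · intro hx
    have h2 := (hx (SemidirectProduct.inl (dmat u2, dmat u2))).mp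
      ⟨(dmat u2, dmat u2), ⟨u2, rfl⟩, rfl⟩
    rw [conj_inl, mem_RD_map] at h2
    obtain ⟨⟨s, hs⟩, -⟩ := h2
    have hsl : (SemidirectProduct.inl (x.left * (dmat u2, dmat u2) * x.left⁻¹) : Ggrp).left
        = x.left * (dmat u2, dmat u2) * x.left⁻¹ := rfl
    rw [hsl] at hs
    have hA : x.left.1 * dmat u2 * x.left.1⁻¹ = dmat s := by
      have := congrArg Prod.fst hs
      simpa only [Prod.fst_mul, Prod.fst_inv] using this
    have hB : x.left.2 * dmat u2 * x.left.2⁻¹ = dmat s := by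
      have := congrArg Prod.snd hs
      simpa only [Prod.snd_mul, Prod.snd_inv] using this
    have hA' : x.left.1 * dmat u2 = dmat s * x.left.1 := mul_inv_eq_iff_eq_mul.mp hA
    have hB' : x.left.2 * dmat u2 = dmat s * x.left.2 := mul_inv_eq_iff_eq_mul.mp hB
    rcases diag_or_anti x.left.1 s hA' with ⟨a1, a2, a3⟩ | ⟨a1, a2, a3⟩ <;>
      rcases diag_or_anti x.left.2 s hB' with ⟨b1, b2, b3⟩ | ⟨b1, b2, b3⟩
    · exact Or.inl ⟨a1, a2, b1, b2⟩
    · rw [a3] at b3; norm_num at b3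
    · rw [a3] at b3; norm_num at b3
    · exact Or.inr ⟨a1, a2, b1, b2⟩
  · intro hx h
    constructor
    · exact fun hh => conj_mem x hx hh
    · intro hh
      have hxinv : x⁻¹ ∈ liftSub Ssub Ssub_swap_invariant :=
        (liftSub Ssub Ssub_swap_invariant).inv_mem hx
      have := conj_mem x⁻¹ hxinv hh
      rw [inv_inv] at this
      have he : x⁻¹ * (x * h * x⁻¹) * x = h := by group
      rwa [he] at this

/-- **Proposition 4.6(ii).** The normalizer of `R_D × {0}` in
`G = (SL(2,ℂ) × SL(2,ℂ)) ⋊ ℤ/2ℤ` equals the subgroup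
`S ⋊ ℤ/2ℤ = {(h, ε) ∈ G : h ∈ S}`. -/
theorem normalizer_RD_eq_S_semidirect :
    Subgroup.normalizer ((RD.map (SemidirectProduct.inl : (SL2 × SL2) →* Ggrp)) : Set Ggrp)
      = liftSub Ssub Ssub_swap_invariant :=
  normalizer_RD_eq_S_semidirect'
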